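/- The Markov chain on the set Ω of Nash equilibria of the best shot game, defined by picking uniformly at random a vertex playing 0, flipping it to 1, and running best response dynamics to a new Nash equilibrium, is irreducible: every Nash equilibrium is reachable from every other with positive probability in finitely many steps. -/

import Mathlib

/-- A set of vertices is independent: no two of its members are adjacent. -/
def IsIndep {V : Type*} (G : SimpleGraph V) (S : Set V) : Prop :=
  ∀ ⦃a⦄, a ∈ S → ∀ ⦃b⦄, b ∈ S → ¬ G.Adj a b

/-- A set of vertices is dominating: every vertex outside has a neighbor inside. -/
def IsDom {V : Type*} (G : SimpleGraph V) (S : Set V) : Prop :=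
  ∀ v, v ∉ S → ∃ u ∈ S, G.Adj v u

/-- Nash equilibrium of the best shot game: a vertex plays 1 iff all its
neighbors play 0. -/
def BestShotNE {V : Type*} (G : SimpleGraph V) (x : V → Bool) : Prop :=
  ∀ i, x i = true ↔ ∀ j, G.Adj i j → x j = false

/-- A vertex `j` is unsatisfied in profile `y`: either it plays 0 and all its
neighbors play 0, or it plays 1 and some neighbor plays 1. -/
def Unsat {V : Type*} (G : SimpleGraph V) (y : V → Bool) (j : V) : Prop :=
  (y j = false ∧ ∀ k, G.Adj j k → y k = false) ∨
  (y j = true ∧ ∃ k, G.Adj j k ∧ y k = true)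

/-- One asynchronous best-response step: some unsatisfied vertex other than `i`
flips its action. -/
def Step {V : Type*} [DecidableEq V] (G : SimpleGraph V) (i : V)
    (y y' : V → Bool) : Prop :=
  ∃ j, j ≠ i ∧ Unsat G y j ∧ y' = Function.update y j (!y j)

/-- One step of the planner's Markov chain on Nash equilibria: flip some
0-player `i` to 1, run best response dynamics, reach a new Nash equilibrium. -/
def NETrans {V : Type*} [DecidableEq V] (G : SimpleGraph V)
    (x y : V → Bool) : Prop :=
  ∃ i, x i = false ∧
    Relation.ReflTransGen (Step G i) (Function.update x i true) y ∧
    BestShotNE G y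

lemma indep_of_NE {V : Type*} {G : SimpleGraph V} {x : V → Bool}
    (hx : BestShotNE G x) : ∀ a b, x a = true → x b = true → ¬ G.Adj a b := by
  intro a b ha hb hab
  have := (hx a).1 ha b hab
  simp [hb] at this

lemma exists_true_nbr {V : Type*} {G : SimpleGraph V} {x : V → Bool}
    (hx : BestShotNE G x) {v : V} (hv : x v = false) :
    ∃ j, G.Adj v j ∧ x j = true := by
  by_contra h
  push_neg at h
  have := (hx v).2 (fun j hj => by simpa using h j hj)
  simp [hv] at this

/-- An independent profile with no unsatisfied 0-player is a Nash equilibrium. -/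
lemma NE_of_indep {V : Type*} {G : SimpleGraph V} {z : V → Bool}
    (hindep : ∀ a b, z a = true → z b = true → ¬ G.Adj a b)
    (h : ¬ ∃ v, z v = false ∧ ∀ k, G.Adj v k → z k = false) :
    BestShotNE G z := by
  push_neg at h
  intro v
  constructor
  · intro hv j hj
    by_contra hj'
    have hj'' : z j = true := by simpa using hj'
    exact hindep v j hv hj'' hj
  · intro hall
    by_contra hv
    have hv' : z v = false := by simpa using hv
    obtain ⟨k, hk, hk'⟩ := h v hv'
    exact hk' (hall k hk)

/-- Saturation: from an independent profile with `i` playing 1, best-response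
steps reach a NE without turning anyone off. -/
lemma satA {V : Type*} [Fintype V] [DecidableEq V] (G : SimpleGraph V) (i : V) :
    ∀ n (z : V → Bool), {v | z v = false}.ncard ≤ n →
    (∀ a b, z a = true → z b = true → ¬ G.Adj a b) → z i = true →
    ∃ w, Relation.ReflTransGen (Step G i) z w ∧ BestShotNE G w ∧
      ∀ v, z v = true → w v = true := by
  intro n
  induction n with
  | zero =>
    intro z hcard hindep _
    refine ⟨z, Relation.ReflTransGen.refl, NE_of_indep hindep ?_, fun v hv => hv⟩
    rintro ⟨v, hv, -⟩
    have hempty : {v | z v = false} = ∅ :=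
      (Set.ncard_eq_zero (Set.toFinite _)).mp (Nat.le_zero.mp hcard)
    exact Set.eq_empty_iff_forall_notMem.mp hempty v hv
  | succ n ih =>
    intro z hcard hindep hi
    by_cases h : ∃ v, z v = false ∧ ∀ k, G.Adj v k → z k = false
    · obtain ⟨v, hv, hnb⟩ := h
      have hvi : v ≠ i := fun e => by rw [e, hi] at hv; exact Bool.noConfusion hv
      set z' := Function.update z v true with hz'
      have hstep : Step G i z z' := by
        refine ⟨v, hvi, Or.inl ⟨hv, hnb⟩, ?_⟩
        rw [hv]; rfl
      have hz'v : ∀ u, z u = true → z' u = true := by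
        intro u hu
        rcases eq_or_ne u v with rfl | hne
        · simp [hz']
        · simpa [hz', Function.update_of_ne hne] using hu
      have hindep' : ∀ a b, z' a = true → z' b = true → ¬ G.Adj a b := by
        intro a b ha hb hab
        rcases eq_or_ne a v with rfl | hav
        · rcases eq_or_ne b a with rfl | hba
          · exact G.irrefl hab
          · have hb' : z b = true := by
              simpa [hz', Function.update_of_ne hba] using hb
            have := hnb b hab
            simp [hb'] at this
        · have ha' : z a = true := by simpa [hz', Function.update_of_ne hav] using ha
          rcases eq_or_ne b v with rfl | hbv
          · have := hnb a (G.adj_symm hab)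
            simp [ha'] at this
          · have hb' : z b = true := by
              simpa [hz', Function.update_of_ne hbv] using hb
            exact hindep a b ha' hb' hab
      have hcard' : {u | z' u = false}.ncard ≤ n := by
        have hsub : {u | z' u = false} = {u | z u = false} \ {v} := by
          ext u
          rcases eq_or_ne u v with rfl | hne
          · simp [hz', hv]
          · simp [hz', Function.update_of_ne hne, hne]
        have hlt : ({u | z u = false} \ {v}).ncard < {u | z u = false}.ncard :=
          Set.ncard_diff_singleton_lt_of_mem hv (Set.toFinite _)
        rw [hsub]
        omega
      obtain ⟨w, hrtg, hne, hpres⟩ := ih z' hcard' hindep' (hz'v i hi)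
      exact ⟨w, Relation.ReflTransGen.head hstep hrtg, hne,
        fun u hu => hpres u (hz'v u hu)⟩
    · exact ⟨z, Relation.ReflTransGen.refl, NE_of_indep hindep h, fun v hv => hv⟩

/-- Cleaning: from a profile whose only conflicts involve `i`, best-response
steps (turning off true neighbors of `i`) reach an independent profile,
keeping `i` and every true non-neighbor of `i` at 1. -/
lemma remB {V : Type*} [Fintype V] [DecidableEq V] (G : SimpleGraph V) (i : V) :
    ∀ n (z : V → Bool), {j | G.Adj i j ∧ z j = true}.ncard ≤ n →
    z i = true →
    (∀ a b, z a = true → z b = true → a ≠ i → b ≠ i → ¬ G.Adj a b) →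
    ∃ z1, Relation.ReflTransGen (Step G i) z z1 ∧
      (∀ a b, z1 a = true → z1 b = true → ¬ G.Adj a b) ∧
      z1 i = true ∧ ∀ v, z v = true → ¬ G.Adj i v → z1 v = true := by
  intro n
  induction n with
  | zero =>
    intro z hcard hi hpind
    refine ⟨z, Relation.ReflTransGen.refl, ?_, hi, fun v hv _ => hv⟩
    have hempty : {j | G.Adj i j ∧ z j = true} = ∅ :=
      (Set.ncard_eq_zero (Set.toFinite _)).mp (Nat.le_zero.mp hcard)
    intro a b ha hb hab
    have hno : ∀ j, G.Adj i j → z j = true → False := by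
      intro j h1 h2
      exact Set.eq_empty_iff_forall_notMem.mp hempty j ⟨h1, h2⟩
    rcases eq_or_ne a i with rfl | hai
    · exact hno b hab hb
    rcases eq_or_ne b i with rfl | hbi
    · exact hno a (G.adj_symm hab) ha
    exact hpind a b ha hb hai hbi hab
  | succ n ih =>
    intro z hcard hi hpind
    by_cases h : ∃ j, G.Adj i j ∧ z j = true
    · obtain ⟨j, hij, hj⟩ := h
      have hji : j ≠ i := fun e => by rw [e] at hij; exact G.irrefl hij
      set z' := Function.update z j false with hz'
      have hstep : Step G i z z' := by
        refine ⟨j, hji, Or.inr ⟨hj, i, G.adj_symm hij, hi⟩, ?_⟩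
        rw [hj]; rfl
      have hz'i : z' i = true := by
        rw [hz', Function.update_of_ne (Ne.symm hji)]; exact hi
      have hz'mono : ∀ u, z' u = true → z u = true := by
        intro u hu
        rcases eq_or_ne u j with rfl | hne
        · simp [hz'] at hu
        · simpa [hz', Function.update_of_ne hne] using hu
      have hpind' : ∀ a b, z' a = true → z' b = true → a ≠ i → b ≠ i →
          ¬ G.Adj a b := fun a b ha hb hai hbi =>
        hpind a b (hz'mono a ha) (hz'mono b hb) hai hbi
      have hcard' : {k | G.Adj i k ∧ z' k = true}.ncard ≤ n := by
        have hsub : {k | G.Adj i k ∧ z' k = true} =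
            {k | G.Adj i k ∧ z k = true} \ {j} := by
          ext u
          rcases eq_or_ne u j with rfl | hne
          · simp [hz']
          · simp [hz', Function.update_of_ne hne, hne]
        have hlt : ({k | G.Adj i k ∧ z k = true} \ {j}).ncard <
            {k | G.Adj i k ∧ z k = true}.ncard :=
          Set.ncard_diff_singleton_lt_of_mem ⟨hij, hj⟩ (Set.toFinite _)
        rw [hsub]
        omega
      obtain ⟨z1, hrtg, hind1, hi1, hpres1⟩ := ih z' hcard' hz'i hpind'
      refine ⟨z1, Relation.ReflTransGen.head hstep hrtg, hind1, hi1, ?_⟩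
      intro v hv hniv
      have hvj : v ≠ j := fun e => hniv (e ▸ hij)
      exact hpres1 v (by rw [hz', Function.update_of_ne hvj]; exact hv) hniv
    · push_neg at h
      refine ⟨z, Relation.ReflTransGen.refl, ?_, hi, fun v hv _ => hv⟩
      intro a b ha hb hab
      rcases eq_or_ne a i with rfl | hai
      · exact absurd hb (by simpa using h b hab)
      rcases eq_or_ne b i with rfl | hbi
      · exact absurd ha (by simpa using h a (G.adj_symm hab))
      exact hpind a b ha hb hai hbi hab

/-- If every 1-player of the NE `y` is a 1-player of the NE `x`, then `x = y`. -/
lemma NE_eq_of_subset {V : Type*} {G : SimpleGraph V} {x y : V → Bool}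
    (hx : BestShotNE G x) (hy : BestShotNE G y)
    (hsub : ∀ v, y v = true → x v = true) : x = y := by
  funext v
  cases hyv : y v with
  | true => rw [hsub v hyv]
  | false =>
    by_contra hxv
    have hxv' : x v = true := by
      cases hxv2 : x v with
      | true => rfl
      | false => exact absurd hxv2 hxv
    obtain ⟨j, hj, hj'⟩ := exists_true_nbr hy hyv
    exact indep_of_NE hx v j hxv' (hsub j hj') hj

/-- The Markov chain on Nash equilibria (pick a 0-player uniformly at random,
flip it to 1, run best responses) is irreducible: every Nash equilibrium is
reachable from every other in finitely many steps (each of which has positive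
probability). -/
theorem markov_chain_irreducible
    {V : Type*} [Fintype V] [DecidableEq V] (G : SimpleGraph V)
    (hE : ∃ a b, G.Adj a b)
    (x y : V → Bool) (hx : BestShotNE G x) (hy : BestShotNE G y) :
    Relation.ReflTransGen (NETrans G) x y := by
  classical
  have key : ∀ n (x : V → Bool), BestShotNE G x →
      {v | y v = true ∧ x v = false}.ncard ≤ n →
      Relation.ReflTransGen (NETrans G) x y := by
    intro n
    induction n with
    | zero =>
      intro x hx hcard
      have hempty : {v | y v = true ∧ x v = false} = ∅ :=
        (Set.ncard_eq_zero (Set.toFinite _)).mp (Nat.le_zero.mp hcard)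
      have hsub : ∀ v, y v = true → x v = true := by
        intro v hv
        by_contra h
        have h' : x v = false := by simpa using h
        exact Set.eq_empty_iff_forall_notMem.mp hempty v ⟨hv, h'⟩
      rw [NE_eq_of_subset hx hy hsub]
    | succ n ih =>
      intro x hx hcard
      by_cases h : ∃ i, y i = true ∧ x i = false
      · obtain ⟨i, hyi, hxi⟩ := h
        set z0 := Function.update x i true with hz0
        have hz0i : z0 i = true := by simp [hz0]
        have hpind : ∀ a b, z0 a = true → z0 b = true → a ≠ i → b ≠ i →
            ¬ G.Adj a b := by
          intro a b ha hb hai hbi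
          have ha' : x a = true := by
            simpa [hz0, Function.update_of_ne hai] using ha
          have hb' : x b = true := by
            simpa [hz0, Function.update_of_ne hbi] using hb
          exact indep_of_NE hx a b ha' hb'
        obtain ⟨z1, hrtg1, hind1, hi1, hpres1⟩ :=
          remB G i {j | G.Adj i j ∧ z0 j = true}.ncard z0 le_rfl hz0i hpind
        obtain ⟨w, hrtg2, hwNE, hpres2⟩ :=
          satA G i {v | z1 v = false}.ncard z1 le_rfl hind1 hi1
        have hNET : NETrans G x w := ⟨i, hxi, hrtg1.trans hrtg2, hwNE⟩
        have hwi : w i = true := hpres2 i hi1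
        have hkeep : ∀ v, y v = true → x v = true → w v = true := by
          intro v hyv hxv
          have hvi : v ≠ i := fun e => by rw [e, hxi] at hxv; exact Bool.noConfusion hxv
          have hniv : ¬ G.Adj i v := indep_of_NE hy i v hyi hyv
          have hz0v : z0 v = true := by
            rw [hz0, Function.update_of_ne hvi]; exact hxv
          exact hpres2 v (hpres1 v hz0v hniv)
        have hcard' : {v | y v = true ∧ w v = false}.ncard ≤ n := by
          have hsub : {v | y v = true ∧ w v = false} ⊆
              {v | y v = true ∧ x v = false} \ {i} := by
            rintro v ⟨hyv, hwv⟩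
            have hvi : v ≠ i := fun e => by rw [e, hwi] at hwv; exact Bool.noConfusion hwv
            have hxv : x v = false := by
              cases hxv : x v with
              | false => rfl
              | true => rw [hkeep v hyv hxv] at hwv; exact Bool.noConfusion hwv
            exact ⟨⟨hyv, hxv⟩, hvi⟩
          have h1 := Set.ncard_le_ncard hsub (Set.toFinite _)
          have h2 : ({v | y v = true ∧ x v = false} \ {i}).ncard <
              {v | y v = true ∧ x v = false}.ncard :=
            Set.ncard_diff_singleton_lt_of_mem ⟨hyi, hxi⟩ (Set.toFinite _)
          omega
        exact Relation.ReflTransGen.head hNET (ih w hwNE hcard')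
      · push_neg at h
        have hsub : ∀ v, y v = true → x v = true := by
          intro v hv
          have := h v hv
          simpa using this
        rw [NE_eq_of_subset hx hy hsub]
  exact key _ x hx le_rfl
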